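/- In the set-graph G_{A^(n)} with n ≥ 2, there is exactly one vertex of degree 2^n − 2 (the maximum possible degree), namely the vertex corresponding to the whole set A. -/

import Mathlib

/-- The set-graph `G_{A^(n)}`: vertices are the nonempty subsets of an `n`-element set,
two distinct vertices being adjacent iff the corresponding subsets intersect. -/
def setGraph (n : ℕ) : SimpleGraph {S : Finset (Fin n) // S.Nonempty} where
  Adj S T := S ≠ T ∧ (S.1 ∩ T.1).Nonempty
  symm := ⟨fun S T h => ⟨h.1.symm, by
    obtain ⟨_, h2⟩ := h
    rwa [Finset.inter_comm]⟩⟩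
  loopless := ⟨fun S h => h.1 rfl⟩

instance (n : ℕ) : DecidableRel (setGraph n).Adj := fun S T =>
  inferInstanceAs (Decidable (S ≠ T ∧ (S.1 ∩ T.1).Nonempty))

lemma card_nonempty_subsets (n : ℕ) :
    Fintype.card {S : Finset (Fin n) // S.Nonempty} = 2 ^ n - 1 := by
  rw [Fintype.card_subtype]
  have h : (Finset.univ.filter fun S : Finset (Fin n) => S.Nonempty)
      = Finset.univ.erase ∅ := by
    ext S
    simp [Finset.nonempty_iff_ne_empty]
  rw [h, Finset.card_erase_of_mem (Finset.mem_univ _), Finset.card_univ,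
    Fintype.card_finset, Fintype.card_fin]

theorem stmt_2 (n : ℕ) (hn : 2 ≤ n) (hu : (Finset.univ : Finset (Fin n)).Nonempty) :
    (setGraph n).degree ⟨Finset.univ, hu⟩ = 2 ^ n - 2 ∧
    ∀ v : {S : Finset (Fin n) // S.Nonempty},
      (setGraph n).degree v = 2 ^ n - 2 → v = ⟨Finset.univ, hu⟩ := by
  have hpow : 4 ≤ 2 ^ n := by
    calc 4 = 2 ^ 2 := rfl
    _ ≤ 2 ^ n := Nat.pow_le_pow_right (by norm_num) hn
  constructor
  · have hnb : (setGraph n).neighborFinset ⟨Finset.univ, hu⟩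
        = Finset.univ.erase ⟨Finset.univ, hu⟩ := by
      ext T
      simp only [SimpleGraph.mem_neighborFinset, Finset.mem_erase, Finset.mem_univ,
        and_true]
      simp only [setGraph]
      constructor
      · rintro ⟨h1, _⟩; exact fun h => h1 h.symm
      · intro h
        refine ⟨fun h' => h h'.symm, ?_⟩
        rw [Finset.univ_inter]
        exact T.2
    rw [SimpleGraph.degree, hnb, Finset.card_erase_of_mem (Finset.mem_univ _),
      Finset.card_univ, card_nonempty_subsets]
    omega
  · intro v hdeg
    by_contra hne
    have hx : ∃ x : Fin n, x ∉ v.1 := by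
      by_contra h
      push_neg at h
      exact hne (Subtype.ext (Finset.eq_univ_iff_forall.mpr h))
    obtain ⟨x, hx⟩ := hx
    have hsx : ({x} : Finset (Fin n)).Nonempty := Finset.singleton_nonempty x
    have hvx : v ≠ ⟨{x}, hsx⟩ := by
      intro h
      apply hx
      rw [h]
      exact Finset.mem_singleton_self x
    have hsub : (setGraph n).neighborFinset v
        ⊆ (Finset.univ.erase v).erase ⟨{x}, hsx⟩ := by
      intro T hT
      rw [SimpleGraph.mem_neighborFinset] at hT
      obtain ⟨h1, h2⟩ := hT
      refine Finset.mem_erase.mpr ⟨?_, Finset.mem_erase.mpr ⟨fun h => h1 h.symm, Finset.mem_univ _⟩⟩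
      intro h
      subst h
      obtain ⟨y, hy⟩ := h2
      rw [Finset.mem_inter, Finset.mem_singleton] at hy
      exact hx (hy.2 ▸ hy.1)
    have hle := Finset.card_le_card hsub
    rw [Finset.card_erase_of_mem (Finset.mem_erase.mpr ⟨fun h => hvx h.symm, Finset.mem_univ _⟩),
      Finset.card_erase_of_mem (Finset.mem_univ _), Finset.card_univ,
      card_nonempty_subsets] at hle
    rw [SimpleGraph.degree] at hdeg
    omega
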